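/- Let τ_Σ : (0,R] × (ℝ/2πℤ) → ℝ be C¹ with δ := 1 - 2∂τ_Σ/∂r - ((1/r)∂τ_Σ/∂θ)² > 0 everywhere. Let c = (τ(s), r(s), θ(s)) be a smooth future causal curve in the tube {0 < r ≤ R} of 𝔼^{1,2}_0, i.e. satisfying τ' > 0, r' ≥ 0, and 2τ'r' ≥ (r')² + r²(θ')² everywhere. Then the function f(s) = τ(s) - τ_Σ(r(s), θ(s)) is strictly increasing; in particular c meets the graph of τ_Σ at most once. -/

import Mathlib

/-- If the graph of `τ_Σ` is spacelike (`δ > 0`) in the BTZ tube `{0 < r ≤ R}`, then along any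
smooth future causal curve `c = (τ, r, θ)` the function `s ↦ τ(s) - τ_Σ(r(s), θ(s))` is
strictly increasing; in particular the curve meets the graph at most once. -/
theorem btz_graph_acausal (R : ℝ) (hR : 0 < R)
    (τS τSr τSθ : ℝ → ℝ → ℝ)
    (hδ : ∀ r θ : ℝ, 0 < r → r ≤ R →
      0 < 1 - 2 * τSr r θ - ((1/r) * τSθ r θ)^2)
    (τ r θ τ' r' θ' : ℝ → ℝ)
    (hτ : ∀ s, HasDerivAt τ (τ' s) s)
    (hr : ∀ s, HasDerivAt r (r' s) s)
    (hθ : ∀ s, HasDerivAt θ (θ' s) s)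
    (hrange : ∀ s, 0 < r s ∧ r s ≤ R)
    (hcausal : ∀ s, 0 < τ' s ∧ 0 ≤ r' s ∧
      (r' s)^2 + (r s)^2 * (θ' s)^2 ≤ 2 * τ' s * r' s)
    (hchain : ∀ s, HasDerivAt (fun u => τS (r u) (θ u))
      (τSr (r s) (θ s) * r' s + τSθ (r s) (θ s) * θ' s) s) :
    StrictMono (fun s => τ s - τS (r s) (θ s))
    ∧ ∀ s t : ℝ, τ s = τS (r s) (θ s) → τ t = τS (r t) (θ t) → s = t := by
  set f : ℝ → ℝ := fun s => τ s - τS (r s) (θ s) with hf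
  have hfd : ∀ s, HasDerivAt f
      (τ' s - (τSr (r s) (θ s) * r' s + τSθ (r s) (θ s) * θ' s)) s :=
    fun s => (hτ s).sub (hchain s)
  have key : ∀ s, 0 < τ' s - (τSr (r s) (θ s) * r' s + τSθ (r s) (θ s) * θ' s) := by
    intro s
    obtain ⟨hr0, hrR⟩ := hrange s
    obtain ⟨hτp, hr'p, hc⟩ := hcausal s
    have hδs := hδ (r s) (θ s) hr0 hrR
    set a : ℝ := τSθ (r s) (θ s) / r s with ha
    have hτSθ : τSθ (r s) (θ s) = a * r s := by
      rw [ha, div_mul_cancel₀ _ hr0.ne']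
    have hda : (1 / r s) * τSθ (r s) (θ s) = a := by
      rw [ha]; ring
    rw [hda] at hδs
    have hδ' : 2 * τSr (r s) (θ s) < 1 - a ^ 2 := by linarith
    rcases eq_or_lt_of_le hr'p with h0 | hpos
    · have hθ2 : (r s) ^ 2 * (θ' s) ^ 2 ≤ 0 := by nlinarith
      have hθ0 : θ' s = 0 := by
        have h1 : (θ' s) ^ 2 ≤ 0 := by
          have hr2 : 0 < (r s) ^ 2 := by positivity
          nlinarith
        have := sq_nonneg (θ' s)
        have : (θ' s) ^ 2 = 0 := le_antisymm h1 this
        exact pow_eq_zero_iff (by norm_num) |>.mp this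
      rw [hθ0, ← h0]
      simpa using hτp
    · rw [hτSθ]
      nlinarith [sq_nonneg (a * r' s - r s * θ' s), mul_pos hpos hpos,
        mul_lt_mul_of_pos_right hδ' (mul_pos hpos hpos)]
  have hmono : StrictMono f := by
    apply strictMono_of_deriv_pos
    intro s
    rw [(hfd s).deriv]
    exact key s
  exact ⟨hmono, fun s t hs ht => hmono.injective (by simp [hf, hs, ht])⟩
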